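/- If additionally either (a) the spectrum of L is contained in [0, 1 + 1/(2δ)], or (b) λ_{↑2}(L) ≤ 1/δ, then λ_{↓2}(q(δ,L)) = q(δ, λ_{↑2}(L)) exactly. -/

import Mathlib

open Matrix Finset

noncomputable def q (δ lam : ℝ) : ℝ := -(1 + 2 * δ) * lam + δ * lam ^ 2

/-- The eigenvalues of a Hermitian real matrix, sorted in increasing order (with
multiplicity). -/
noncomputable def eigList {n : ℕ} (A : Matrix (Fin n) (Fin n) ℝ) (hA : A.IsHermitian) :
    List ℝ :=
  (Multiset.map hA.eigenvalues Finset.univ.val).sort (· ≤ ·)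

/-- Second-smallest eigenvalue. -/
noncomputable def lamUp2 {n : ℕ} (A : Matrix (Fin n) (Fin n) ℝ) (hA : A.IsHermitian) : ℝ :=
  (eigList A hA).getD 1 0

/-- Largest eigenvalue. -/
noncomputable def lamDown1 {n : ℕ} (A : Matrix (Fin n) (Fin n) ℝ) (hA : A.IsHermitian) : ℝ :=
  (eigList A hA).reverse.getD 0 0

/-- Second-largest eigenvalue. -/
noncomputable def lamDown2 {n : ℕ} (A : Matrix (Fin n) (Fin n) ℝ) (hA : A.IsHermitian) : ℝ :=
  (eigList A hA).reverse.getD 1 0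

open Polynomial in
lemma my_charpoly_conj {n : ℕ} (U B V : Matrix (Fin n) (Fin n) ℝ)
    (hUV : U * V = 1) : (U * B * V).charpoly = B.charpoly := by
  classical
  set f := (C : ℝ →+* ℝ[X]).mapMatrix (m := Fin n) with hf
  have hcomm : Commute (Matrix.scalar (Fin n) (X : ℝ[X])) (f U) :=
    scalar_commute _ (fun r' => Commute.all _ _) _
  have key : charmatrix (U * B * V) = f U * charmatrix B * f V := by
    show Matrix.scalar (Fin n) X - f (U * B * V)
        = f U * (Matrix.scalar (Fin n) X - f B) * f V
    rw [mul_sub, sub_mul, _root_.map_mul f, _root_.map_mul f]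
    congr 1
    rw [← hcomm.eq, mul_assoc, ← _root_.map_mul f, hUV, _root_.map_one f, mul_one]
  show (charmatrix (U * B * V)).det = (charmatrix B).det
  rw [key, det_mul, det_mul, mul_right_comm, ← det_mul, ← _root_.map_mul f, hUV, _root_.map_one f,
    det_one, one_mul]

open Polynomial in
lemma my_charpoly_diagonal {n : ℕ} (d : Fin n → ℝ) :
    (diagonal d).charpoly = ∏ i, (X - C (d i)) := by
  classical
  have h : charmatrix (diagonal d) = diagonal fun i => X - C (d i) := by
    ext i j
    by_cases h : i = j
    · subst h; simp [charmatrix_apply_eq]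
    · rw [charmatrix_apply_ne _ _ _ h, diagonal_apply_ne _ h, diagonal_apply_ne _ h,
        map_zero, neg_zero]
  show (charmatrix (diagonal d)).det = _
  rw [h, det_diagonal]

open Polynomial in
lemma my_charpoly_hermitian {n : ℕ} {A : Matrix (Fin n) (Fin n) ℝ} (hA : A.IsHermitian) :
    A.charpoly = ∏ i, (X - C (hA.eigenvalues i)) := by
  classical
  have hs := hA.spectral_theorem
  have hd : (RCLike.ofReal ∘ hA.eigenvalues : Fin n → ℝ) = hA.eigenvalues := rfl
  rw [hd, Unitary.conjStarAlgAut_apply] at hs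
  have hUV : (hA.eigenvectorUnitary : Matrix (Fin n) (Fin n) ℝ) *
      star (hA.eigenvectorUnitary : Matrix (Fin n) (Fin n) ℝ) = 1 :=
    mem_unitaryGroup_iff.1 hA.eigenvectorUnitary.2
  have h := my_charpoly_conj (hA.eigenvectorUnitary : Matrix (Fin n) (Fin n) ℝ)
    (diagonal hA.eigenvalues) (star (hA.eigenvectorUnitary : Matrix (Fin n) (Fin n) ℝ)) hUV
  rw [← hs] at h
  rw [h, my_charpoly_diagonal]

open Polynomial in
lemma my_eig_multiset_conj {n : ℕ} {A : Matrix (Fin n) (Fin n) ℝ} (hA : A.IsHermitian)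
    (U : Matrix (Fin n) (Fin n) ℝ) (hUV : U * star U = 1)
    (d : Fin n → ℝ) (h : A = U * diagonal d * star U) :
    Multiset.map hA.eigenvalues Finset.univ.val = Multiset.map d Finset.univ.val := by
  classical
  have h1 : A.charpoly = ∏ i, (X - C (d i)) := by
    rw [h, my_charpoly_conj _ _ _ hUV, my_charpoly_diagonal]
  have h2 := my_charpoly_hermitian hA
  have key : (∏ i, (X - C (hA.eigenvalues i))) = ∏ i, (X - C (d i)) := h2.symm.trans h1
  have e1 : ∀ g : Fin n → ℝ, (∏ i, (X - C (g i))).roots = Multiset.map g Finset.univ.val := by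
    intro g
    have hmm : Multiset.map (fun i => (X : ℝ[X]) - C (g i)) Finset.univ.val
        = Multiset.map (fun a => X - C a) (Multiset.map g Finset.univ.val) := by
      rw [Multiset.map_map]
      rfl
    rw [Finset.prod_eq_multiset_prod, hmm, roots_multiset_prod_X_sub_C]
  have := congrArg Polynomial.roots key
  rwa [e1, e1] at this

/-- Characterization of the second-smallest entry of a sorted multiset with a strict
unique minimum. -/
lemma my_sort_getD_one (t : Multiset ℝ) (hcard : 2 ≤ Multiset.card t) (a : ℝ)
    (ha : a ∈ t) (hmin : ∀ x ∈ t.erase a, a < x) :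
    (t.sort (· ≤ ·)).getD 1 0 ∈ t.erase a ∧
      ∀ x ∈ t.erase a, (t.sort (· ≤ ·)).getD 1 0 ≤ x := by
  have hlen : (t.sort (· ≤ ·)).length = Multiset.card t := Multiset.length_sort _
  have hsorted := Multiset.pairwise_sort t (· ≤ ·)
  have hcoe : ↑(t.sort (· ≤ ·)) = t := Multiset.sort_eq t _
  obtain ⟨x, y, r, hl⟩ : ∃ x y r, t.sort (· ≤ ·) = x :: y :: r := by
    match hL : t.sort (· ≤ ·) with
    | [] => rw [hL] at hlen; simp at hlen; omega
    | [x] => rw [hL] at hlen; simp at hlen; omega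
    | x :: y :: r => exact ⟨x, y, r, rfl⟩
  rw [hl] at hsorted hcoe ⊢
  rw [List.pairwise_cons] at hsorted
  obtain ⟨hx, hsorted2⟩ := hsorted
  rw [List.pairwise_cons] at hsorted2
  obtain ⟨hy, _⟩ := hsorted2
  have hxa : x = a := by
    by_contra hne
    have hxt : x ∈ t := by rw [← hcoe]; exact Multiset.mem_coe.2 (by simp)
    have hxe : x ∈ t.erase a := (Multiset.mem_erase_of_ne hne).2 hxt
    have h1 := hmin x hxe
    have hat : a ∈ (x :: y :: r : List ℝ) := by
      rw [← Multiset.mem_coe, hcoe]; exact ha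
    rcases List.mem_cons.1 hat with h' | h'
    · exact hne h'.symm
    · exact absurd (hx a h') (by linarith)
  subst hxa
  have herase : t.erase x = ↑(y :: r) := by
    rw [← hcoe, ← Multiset.cons_coe, Multiset.erase_cons_head]
  have hgetD : ((x :: y :: r : List ℝ)).getD 1 0 = y := rfl
  rw [hgetD, herase]
  constructor
  · exact Multiset.mem_coe.2 (by simp)
  · intro z hz
    rcases List.mem_cons.1 (Multiset.mem_coe.1 hz) with h' | h'
    · exact h'.symm.le
    · exact hy z h'

/-- Characterization of the second-largest entry of a sorted multiset with a strict
unique maximum `a` and a maximum `b` among the rest. -/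
lemma my_sort_reverse_getD_one (t : Multiset ℝ) (hcard : 2 ≤ Multiset.card t) (a b : ℝ)
    (ha : a ∈ t) (hb : b ∈ t.erase a) (hba : b < a)
    (hmax : ∀ x ∈ t.erase a, x ≤ b) :
    (t.sort (· ≤ ·)).reverse.getD 1 0 = b := by
  have hlen : (t.sort (· ≤ ·)).reverse.length = Multiset.card t := by
    rw [List.length_reverse, Multiset.length_sort]
  have hsorted : (t.sort (· ≤ ·)).reverse.Pairwise (fun p r : ℝ => r ≤ p) :=
    List.pairwise_reverse.2 (Multiset.pairwise_sort t (· ≤ ·))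
  have hcoe : ↑((t.sort (· ≤ ·)).reverse) = t := by
    rw [Multiset.coe_reverse, Multiset.sort_eq]
  obtain ⟨x, y, r, hl⟩ : ∃ x y r, (t.sort (· ≤ ·)).reverse = x :: y :: r := by
    match hL : (t.sort (· ≤ ·)).reverse with
    | [] => rw [hL] at hlen; simp at hlen; omega
    | [x] => rw [hL] at hlen; simp at hlen; omega
    | x :: y :: r => exact ⟨x, y, r, rfl⟩
  rw [hl] at hsorted hcoe ⊢
  rw [List.pairwise_cons] at hsorted
  obtain ⟨hx, hsorted2⟩ := hsorted
  rw [List.pairwise_cons] at hsorted2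
  obtain ⟨hy, _⟩ := hsorted2
  have hxa : x = a := by
    by_contra hne
    have hxt : x ∈ t := by rw [← hcoe]; exact Multiset.mem_coe.2 (by simp)
    have hxe : x ∈ t.erase a := (Multiset.mem_erase_of_ne hne).2 hxt
    have h1 : x ≤ b := hmax x hxe
    have hat : a ∈ (x :: y :: r : List ℝ) := by
      rw [← Multiset.mem_coe, hcoe]; exact ha
    rcases List.mem_cons.1 hat with h' | h'
    · exact hne h'.symm
    · exact absurd (hx a h') (by linarith)
  subst hxa
  have herase : t.erase x = ↑(y :: r) := by
    rw [← hcoe, ← Multiset.cons_coe, Multiset.erase_cons_head]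
  have hgetD : ((x :: y :: r : List ℝ)).getD 1 0 = y := rfl
  rw [hgetD]
  have hyb : y ≤ b := by
    apply hmax
    rw [herase]
    exact Multiset.mem_coe.2 (by simp)
  have hby : b ≤ y := by
    rw [herase] at hb
    rcases List.mem_cons.1 (Multiset.mem_coe.1 hb) with h' | h'
    · exact h'.le
    · exact hy b h'
  linarith


theorem damping_rate_exact {n : ℕ} (hn : 2 ≤ n)
    (L : Matrix (Fin n) (Fin n) ℝ) (hL : L.IsHermitian)
    (hspec : ∀ i, hL.eigenvalues i ∈ Set.Icc (0 : ℝ) 2)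
    (hker : (Finset.univ.filter fun i => hL.eigenvalues i = 0).card = 1)
    (δ : ℝ) (hδ : 0 < δ)
    (M : Matrix (Fin n) (Fin n) ℝ)
    (hMdef : M = (-(1 + 2 * δ)) • L + δ • (L * L)) (hM : M.IsHermitian)
    (hcase : (∀ i, hL.eigenvalues i ≤ 1 + 1 / (2 * δ)) ∨ lamUp2 L hL ≤ 1 / δ) :
    lamDown2 M hM = q δ (lamUp2 L hL) := by
  classical
  set e : Fin n → ℝ := hL.eigenvalues with he
  set s : Multiset ℝ := Multiset.map e Finset.univ.val with hs
  have hcards : Multiset.card s = n := by simp [hs]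
  -- membership facts
  have hmem_range : ∀ x ∈ s, ∃ i, e i = x := by
    intro x hx
    obtain ⟨i, _, hi⟩ := Multiset.mem_map.1 hx
    exact ⟨i, hi⟩
  have hbounds : ∀ x ∈ s, 0 ≤ x ∧ x ≤ 2 := by
    intro x hx
    obtain ⟨i, hi⟩ := hmem_range x hx
    exact hi ▸ ⟨(hspec i).1, (hspec i).2⟩
  -- 0 ∈ s with multiplicity 1
  have hex : ∃ i, e i = 0 := by
    have hne : (Finset.univ.filter fun i => e i = 0).Nonempty := by
      rw [← Finset.card_pos, hker]; norm_num
    obtain ⟨i, hi⟩ := hne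
    exact ⟨i, (Finset.mem_filter.1 hi).2⟩
  have h0s : (0 : ℝ) ∈ s := by
    obtain ⟨i, hi⟩ := hex
    exact Multiset.mem_map.2 ⟨i, by simp, hi⟩
  have hcount : s.count 0 = 1 := by
    rw [hs, Multiset.count_map]
    have : Multiset.filter (fun a => (0 : ℝ) = e a) Finset.univ.val
        = Multiset.filter (fun a => e a = 0) Finset.univ.val := by
      apply Multiset.filter_congr
      intro x _
      exact eq_comm
    rw [this, ← Finset.filter_val, ← Finset.card, hker]
  have h0ne : (0 : ℝ) ∉ s.erase 0 := by
    rw [← Multiset.count_eq_zero, Multiset.count_erase_self, hcount]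
  have hpos : ∀ x ∈ s.erase 0, (0 : ℝ) < x := by
    intro x hx
    have hxs : x ∈ s := Multiset.mem_of_mem_erase hx
    rcases lt_or_eq_of_le (hbounds x hxs).1 with h | h
    · exact h
    · exact absurd (h ▸ hx) h0ne
  -- second-smallest eigenvalue of L
  have hm_def : lamUp2 L hL = (s.sort (· ≤ ·)).getD 1 0 := rfl
  obtain ⟨hm_mem, hm_min⟩ := my_sort_getD_one s (by omega) 0 h0s hpos
  rw [← hm_def] at hm_mem hm_min
  set m := lamUp2 L hL with hm
  have hms : m ∈ s := Multiset.mem_of_mem_erase hm_mem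
  have hm_pos : 0 < m := hpos m hm_mem
  have hm2 : m ≤ 2 := (hbounds m hms).2
  -- spectral decomposition of M
  set U : Matrix (Fin n) (Fin n) ℝ := (hL.eigenvectorUnitary : Matrix (Fin n) (Fin n) ℝ)
    with hU
  have hUV : U * star U = 1 := mem_unitaryGroup_iff.1 hL.eigenvectorUnitary.2
  have hVU : star U * U = 1 := mem_unitaryGroup_iff'.1 hL.eigenvectorUnitary.2
  have hLspec : L = U * diagonal e * star U := by
    have := hL.spectral_theorem
    have hd : (RCLike.ofReal ∘ hL.eigenvalues : Fin n → ℝ) = hL.eigenvalues := rfl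
    rw [hd, Unitary.conjStarAlgAut_apply] at this
    rw [← he, ← hU] at this
    exact this
  have hsq : (U * diagonal e * star U) * (U * diagonal e * star U)
      = U * (diagonal e * diagonal e) * star U := by
    simp only [Matrix.mul_assoc]
    rw [← Matrix.mul_assoc (star U) U, hVU, Matrix.one_mul]
  have hsmul : ∀ (c : ℝ) (D : Matrix (Fin n) (Fin n) ℝ),
      c • (U * D * star U) = U * (c • D) * star U := by
    intro c D
    rw [mul_smul_comm, smul_mul_assoc]
  have hdiag : (-(1 + 2 * δ)) • diagonal e
        + δ • (diagonal e * diagonal e)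
      = diagonal (fun i => q δ (e i)) := by
    rw [diagonal_mul_diagonal, ← diagonal_smul, ← diagonal_smul, diagonal_add]
    ext i j
    simp only [Matrix.diagonal_apply, Pi.add_apply, Pi.smul_apply, Pi.mul_apply, smul_eq_mul, q]
    split_ifs with h
    · ring
    · rfl
  have hMspec : M = U * diagonal (fun i => q δ (e i)) * star U := by
    rw [hMdef, hLspec, hsq, hsmul, hsmul, ← hdiag, Matrix.mul_add, Matrix.add_mul]
  have ht : Multiset.map hM.eigenvalues Finset.univ.val
      = Multiset.map (q δ) s := by
    rw [my_eig_multiset_conj hM U hUV _ hMspec, hs, Multiset.map_map]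
    rfl
  -- structure of the mapped multiset
  have hq0 : q δ 0 = 0 := by simp [q]
  have hcons : Multiset.map (q δ) s = 0 ::ₘ Multiset.map (q δ) (s.erase 0) := by
    conv_lhs => rw [← Multiset.cons_erase h0s]
    rw [Multiset.map_cons, hq0]
  have herase : (Multiset.map (q δ) s).erase 0 = Multiset.map (q δ) (s.erase 0) := by
    rw [hcons, Multiset.erase_cons_head]
  have h0t : (0 : ℝ) ∈ Multiset.map (q δ) s := by
    rw [hcons]; exact Multiset.mem_cons_self _ _
  have hqm_mem : q δ m ∈ (Multiset.map (q δ) s).erase 0 := by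
    rw [herase]
    exact Multiset.mem_map_of_mem _ hm_mem
  have hqm_neg : q δ m < 0 := by
    simp only [q]
    nlinarith [mul_nonneg (mul_nonneg hδ.le hm_pos.le) (sub_nonneg.2 hm2)]
  have hqmax : ∀ x ∈ (Multiset.map (q δ) s).erase 0, x ≤ q δ m := by
    intro x hx
    rw [herase] at hx
    obtain ⟨lam, hlam, rfl⟩ := Multiset.mem_map.1 hx
    have hlam_s : lam ∈ s := Multiset.mem_of_mem_erase hlam
    have hlam2 : lam ≤ 2 := (hbounds lam hlam_s).2
    have hmlam : m ≤ lam := hm_min lam hlam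
    have hsum : δ * (lam + m) ≤ 2 * δ + 1 := by
      rcases hcase with hA | hB
      · obtain ⟨i, hi⟩ := hmem_range lam hlam_s
        obtain ⟨j, hj⟩ := hmem_range m hms
        have h1 : lam ≤ 1 + 1 / (2 * δ) := hi ▸ hA i
        have h2 : m ≤ 1 + 1 / (2 * δ) := hj ▸ hA j
        have h3 : δ * (1 / (2 * δ)) = 1 / 2 := by field_simp
        nlinarith [mul_le_mul_of_nonneg_left h1 hδ.le, mul_le_mul_of_nonneg_left h2 hδ.le]
      · have h1 : δ * (1 / δ) = 1 := by field_simp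
        nlinarith [mul_le_mul_of_nonneg_left hB hδ.le, mul_le_mul_of_nonneg_left hlam2 hδ.le]
    simp only [q]
    nlinarith [mul_nonneg (sub_nonneg.2 hmlam) (sub_nonneg.2 hsum)]
  -- conclude
  have hfinal := my_sort_reverse_getD_one (Multiset.map (q δ) s)
    (by rw [Multiset.card_map, hcards]; omega) 0 (q δ m) h0t hqm_mem hqm_neg hqmax
  have hD2 : lamDown2 M hM
      = ((Multiset.map (q δ) s).sort (· ≤ ·)).reverse.getD 1 0 := by
    unfold lamDown2 eigList
    rw [ht]
  rw [hD2, hfinal]
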